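/- Let δ ≥ 1 and k ≥ 2 be integers, and let G be the join of the complete graph K_δ with the empty graph on δ + k vertices. Then every subgraph of G that is a tree with at most k leaves has at most 2δ + k − 1 vertices, i.e., t_k(G) ≤ 2δ + k − 1. -/

import Mathlib

open SimpleGraph

/-- The degree of a vertex: the cardinality of its neighborhood. -/
noncomputable def deg {V : Type*} (G : SimpleGraph V) (x : V) : ℕ :=
  (G.neighborSet x).ncard

/-- The number of leaves (vertices of degree 1) of a subgraph. -/
noncomputable def leafCount {V : Type*} {G : SimpleGraph V} (H : G.Subgraph) : ℕ :=
  {v : H.verts | (H.coe.neighborSet v).ncard = 1}.ncard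

/-- `H` is a tree with at most `k` leaves (a `k`-ended tree). -/
def IsEndedTree {V : Type*} {G : SimpleGraph V} (H : G.Subgraph) (k : ℕ) : Prop :=
  H.coe.IsTree ∧ leafCount H ≤ k

/-- `t_k`: the maximum order of a subgraph of `G` that is a tree with at most `k` leaves. -/
noncomputable def treeOrd {V : Type*} (G : SimpleGraph V) (k : ℕ) : ℕ :=
  sSup {m | ∃ H : G.Subgraph, IsEndedTree H k ∧ H.verts.ncard = m}

/-- The number of vertices of a longest path in `G`. -/
noncomputable def pathOrd {V : Type*} (G : SimpleGraph V) : ℕ :=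
  sSup {m | ∃ (u v : V) (p : G.Walk u v), p.IsPath ∧ p.support.length = m}

/-- `s` is an independent set of vertices of `G`. -/
def IsIndep {V : Type*} (G : SimpleGraph V) (s : Set V) : Prop :=
  s.Pairwise fun a b => ¬ G.Adj a b

/-- `σ₃`: the minimum degree sum over independent triples of vertices. -/
noncomputable def sigma3 {V : Type*} (G : SimpleGraph V) : ℕ :=
  sInf {s | ∃ x y z : V, x ≠ y ∧ x ≠ z ∧ y ≠ z ∧
    ¬G.Adj x y ∧ ¬G.Adj x z ∧ ¬G.Adj y z ∧ s = deg G x + deg G y + deg G z}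

set_option maxHeartbeats 2000000 in
/-- Let `G = (δ+k)K₁ + K_δ`, `δ ≥ 1`, `k ≥ 2`. Then every subgraph of
`G` that is a tree with at most `k` leaves has at most `2δ + k - 1` vertices. -/
theorem join_example_treeOrd_bound (δ k : ℕ) (hδ : 1 ≤ δ) (hk : 2 ≤ k)
    (G : SimpleGraph (Fin δ ⊕ Fin (δ + k)))
    (hG : ∀ u v, G.Adj u v ↔ u ≠ v ∧ (u.isLeft = true ∨ v.isLeft = true)) :
    ∀ H : G.Subgraph, IsEndedTree H k → H.verts.ncard ≤ 2 * δ + k - 1 := by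
  classical
  rintro H ⟨htree, hleaf⟩
  haveI : Fintype H.verts := Fintype.ofFinite _
  haveI : DecidableRel H.coe.Adj := Classical.decRel _
  set n := Fintype.card H.verts with hn
  have hncard : H.verts.ncard = n := by
    rw [Set.ncard_eq_toFinset_card', Set.toFinset_card]
  rw [hncard]
  by_cases hsmall : n ≤ 2
  · omega
  -- every vertex has positive degree
  have hdeg : ∀ v : H.verts, 0 < H.coe.degree v := by
    intro v
    obtain ⟨w, hw⟩ := Fintype.exists_ne_of_one_lt_card (by omega) v
    obtain ⟨p⟩ := htree.isConnected v w
    cases p with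
    | nil => exact absurd rfl hw.symm
    | cons h q =>
      rw [SimpleGraph.degree_pos_iff_exists_adj]
      exact ⟨_, h⟩
  have hdn : ∀ v : H.verts, (H.coe.neighborSet v).ncard = H.coe.degree v := by
    intro v
    rw [← SimpleGraph.card_neighborSet_eq_degree, ← Nat.card_eq_fintype_card,
      Nat.card_coe_set_eq]
  set A' : Finset H.verts := Finset.univ.filter
    (fun v => (v : Fin δ ⊕ Fin (δ + k)).isLeft = true) with hA'
  set B' : Finset H.verts := Finset.univ.filter
    (fun v => ¬ (v : Fin δ ⊕ Fin (δ + k)).isLeft = true) with hB'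
  -- A' has at most δ elements
  have ha : A'.card ≤ δ := by
    have := Finset.card_le_card_of_injOn
      (fun v : H.verts => Sum.elim id (fun _ => (⟨0, hδ⟩ : Fin δ)) (v : Fin δ ⊕ Fin (δ + k)))
      (fun a _ => Finset.mem_univ _) (s := A') (t := Finset.univ) ?_
    · simpa using this
    · intro v hv w hw hvw
      simp only [hA', Finset.coe_filter, Set.mem_setOf_eq] at hv hw
      obtain ⟨i, hi⟩ := Sum.isLeft_iff.mp hv.2
      obtain ⟨j, hj⟩ := Sum.isLeft_iff.mp hw.2
      simp only [hi, hj, Sum.elim_inl, id] at hvw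
      exact Subtype.ext (by rw [hi, hj, hvw])
  -- leaf bound
  have hL : (Finset.univ.filter (fun v => H.coe.degree v = 1)).card ≤ k := by
    refine le_trans (le_of_eq ?_) hleaf
    rw [leafCount, Set.ncard_eq_toFinset_card']
    congr 1
    ext v
    simp only [Set.mem_toFinset, Set.mem_setOf_eq, Finset.mem_filter, Finset.mem_univ,
      true_and, hdn v]
  -- lower bound for degree sum over B'
  have key1 : 2 * B'.card ≤ (∑ v ∈ B', H.coe.degree v) + k := by
    have h1 : 2 * B'.card ≤ (∑ v ∈ B', H.coe.degree v) +
        (B'.filter (fun v => H.coe.degree v = 1)).card := by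
      have hstep : ∀ v ∈ B', 2 ≤ H.coe.degree v + (if H.coe.degree v = 1 then 1 else 0) := by
        intro v _
        have := hdeg v
        by_cases h1 : H.coe.degree v = 1
        · rw [if_pos h1, h1]
        · rw [if_neg h1]; omega
      calc 2 * B'.card = ∑ _v ∈ B', 2 := by rw [Finset.sum_const, smul_eq_mul, mul_comm]
        _ ≤ ∑ v ∈ B', (H.coe.degree v + (if H.coe.degree v = 1 then 1 else 0)) :=
            Finset.sum_le_sum hstep
        _ = (∑ v ∈ B', H.coe.degree v) +
            ∑ v ∈ B', (if H.coe.degree v = 1 then 1 else 0) := Finset.sum_add_distrib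
        _ = _ := by
            congr 1
            exact_mod_cast Finset.sum_boole (p := fun v => H.coe.degree v = 1) B' (R := ℕ)
    have h2 : (B'.filter (fun v => H.coe.degree v = 1)).card ≤ k :=
      le_trans (Finset.card_le_card (Finset.filter_subset_filter _ (Finset.subset_univ _))) hL
    omega
  -- edge count
  set e := H.coe.edgeFinset.card with he'
  have he : e + 1 = n := htree.card_edgeFinset
  have hsum : (∑ v ∈ A', H.coe.degree v) + (∑ v ∈ B', H.coe.degree v) = 2 * e := by
    have h2e' : (∑ v : H.verts, H.coe.degree v) = 2 * e := by
      rw [← SimpleGraph.sum_degrees_eq_twice_card_edges H.coe]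
      exact Finset.sum_congr rfl fun v _ =>
        congrArg (fun i => @SimpleGraph.degree _ H.coe v i) (Subsingleton.elim _ _)
    rw [Finset.sum_filter_add_sum_filter_not]
    exact h2e'
  -- every edge has an endpoint in A'
  have hA : e ≤ ∑ v ∈ A', H.coe.degree v := by
    have hcs : (A'.sigma (fun v => H.coe.neighborFinset v)).card
        = ∑ v ∈ A', H.coe.degree v := by
      rw [Finset.card_sigma]
      rfl
    rw [← hcs]
    refine Finset.card_le_card_of_surjOn
      (fun p : (_ : H.verts) × H.verts => s(p.1, p.2)) ?_
    intro ed hed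
    induction ed using Sym2.ind with
    | _ x y =>
      have hxy : H.coe.Adj x y := by
        rw [Finset.mem_coe, SimpleGraph.mem_edgeFinset, SimpleGraph.mem_edgeSet] at hed
        exact hed
      have hadj : G.Adj (x : Fin δ ⊕ Fin (δ + k)) (y : Fin δ ⊕ Fin (δ + k)) := H.adj_sub hxy
      have hor := ((hG _ _).mp hadj).2
      rcases hor with hx | hy
      · refine ⟨⟨x, y⟩, ?_, rfl⟩
        simp only [Finset.mem_coe, Finset.mem_sigma, hA', Finset.mem_filter, Finset.mem_univ,
          true_and, SimpleGraph.mem_neighborFinset]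
        exact ⟨hx, hxy⟩
      · refine ⟨⟨y, x⟩, ?_, Sym2.eq_swap⟩
        simp only [Finset.mem_coe, Finset.mem_sigma, hA', Finset.mem_filter, Finset.mem_univ,
          true_and, SimpleGraph.mem_neighborFinset]
        exact ⟨hy, hxy.symm⟩
  have hcard : A'.card + B'.card = n := by
    rw [hA', hB', Finset.card_filter_add_card_filter_not, Finset.card_univ]
  omega
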